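/- Let X be a finite simplicial complex and σ a simplex of X such that the link of σ in X is collapsible. Then X simplicially collapses onto the face-deletion of σ in X. -/
import Mathlib


open Finset

attribute [local instance] Classical.propDecidable

noncomputable section

universe u v

/-- A finite abstract simplicial complex: a finite collection of nonempty finite sets
closed under taking nonempty subsets. -/
def IsComplex {V : Type u} (X : Finset (Finset V)) : Prop :=
  (∀ s ∈ X, s.Nonempty) ∧ ∀ s ∈ X, ∀ t : Finset V, t ⊆ s → t.Nonempty → t ∈ X

/-- `s` is a maximal simplex (facet) of `X`. -/
def IsFacet {V : Type u} (X : Finset (Finset V)) (s : Finset V) : Prop :=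
  s ∈ X ∧ ∀ t ∈ X, s ⊆ t → t = s

/-- An elementary collapse: `σ` is a free face of `X` whose unique maximal coface is `τ`,
and `Y` results from removing all simplices containing `σ`. -/
def ElemCollapse {V : Type u} (X Y : Finset (Finset V)) : Prop :=
  ∃ σ τ : Finset V, σ ∈ X ∧ IsFacet X τ ∧ σ ⊂ τ ∧
    (∀ t ∈ X, σ ⊆ t → t ⊆ τ) ∧ Y = X.filter (fun s => ¬ σ ⊆ s)

/-- `X` simplicially collapses onto `Y`. -/
def Collapses {V : Type u} (X Y : Finset (Finset V)) : Prop :=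
  Relation.ReflTransGen ElemCollapse X Y

/-- `X` is collapsible: it collapses to a single vertex. -/
def Collapsible {V : Type u} (X : Finset (Finset V)) : Prop :=
  ∃ v : V, Collapses X {{v}}

/-- The vertex `v` is dominated by the vertex `w ≠ v`: every facet containing `v`
contains `w`. -/
def Dominated {V : Type u} (X : Finset (Finset V)) (v w : V) : Prop :=
  w ≠ v ∧ ∀ s : Finset V, IsFacet X s → v ∈ s → w ∈ s

/-- An elementary strong collapse: deletion of a dominated vertex. -/
def ElemStrongCollapse {V : Type u} (X Y : Finset (Finset V)) : Prop :=
  ∃ v w : V, {v} ∈ X ∧ Dominated X v w ∧ Y = X.filter (fun s => v ∉ s)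

/-- `X` strongly collapses onto `Y`. -/
def StrongCollapses {V : Type u} (X Y : Finset (Finset V)) : Prop :=
  Relation.ReflTransGen ElemStrongCollapse X Y

/-- `X` is strongly collapsible: it strongly collapses to a single vertex. -/
def StrongCollapsible {V : Type u} (X : Finset (Finset V)) : Prop :=
  ∃ v : V, StrongCollapses X {{v}}

/-- The set of vertices of a complex. -/
def vertexSet {V : Type u} (X : Finset (Finset V)) : Finset V := X.sup id

/-- The link of a simplex `σ` in `X`. -/
def linkC {V : Type u} (X : Finset (Finset V)) (σ : Finset V) : Finset (Finset V) :=
  X.filter (fun η => Disjoint η σ ∧ η ∪ σ ∈ X)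

/-- The face-deletion of `σ` in `X`. -/
def faceDeletion {V : Type u} (X : Finset (Finset V)) (σ : Finset V) : Finset (Finset V) :=
  X.filter (fun η => ¬ σ ⊆ η)

/-- The simplicial join of two complexes (on disjoint vertex sets, via `Sum`). -/
def joinC {A : Type u} {B : Type v} (X : Finset (Finset A)) (Y : Finset (Finset B)) :
    Finset (Finset (A ⊕ B)) :=
  (((insert (∅ : Finset A) X) ×ˢ (insert (∅ : Finset B) Y)).image
      (fun p => p.1.image Sum.inl ∪ p.2.image Sum.inr)).filter (·.Nonempty)

/-- The flag (clique) complex on the admissible vertices (those satisfying `P`) of a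
finite type, with respect to a (reflexive, symmetric) compatibility relation `R`:
simplices are the nonempty finite sets of admissible vertices that are pairwise
compatible. -/
def cliqueComplex {A : Type u} [Fintype A] (P : A → Prop) (R : A → A → Prop) :
    Finset (Finset A) :=
  Finset.univ.filter (fun s : Finset A =>
    s.Nonempty ∧ (∀ a ∈ s, P a) ∧ ∀ a ∈ s, ∀ b ∈ s, R a b)

/-- A complex is a cone if some vertex lies in every maximal simplex. -/
def IsCone {A : Type u} (X : Finset (Finset A)) : Prop :=
  ∃ v : A, {v} ∈ X ∧ ∀ s, IsFacet X s → v ∈ s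

/-- Simplicial isomorphism (onto): `Y` is the image of `X` under an injection of
vertices. -/
def Isom {A : Type u} {B : Type v} (X : Finset (Finset A)) (Y : Finset (Finset B)) : Prop :=
  ∃ f : A → B, Function.Injective f ∧ Y = X.image (fun s => s.image f)


private lemma mem_linkC' {V : Type u} {X : Finset (Finset V)} {σ η : Finset V} :
    η ∈ linkC X σ ↔ η ∈ X ∧ Disjoint η σ ∧ η ∪ σ ∈ X := by
  simp [linkC, Finset.mem_filter, and_assoc]

/-- A collapse of the link induces a collapse of the ambient complex. -/
private lemma step_aux {V : Type u} {X' Z : Finset (Finset V)} {σ : Finset V}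
    (hσne : σ.Nonempty)
    (hX' : IsComplex X') (hσ : σ ∈ X') (hZ : ElemCollapse (linkC X' σ) Z) :
    ∃ X'' : Finset (Finset V), ElemCollapse X' X'' ∧ IsComplex X'' ∧ σ ∈ X'' ∧
      faceDeletion X'' σ = faceDeletion X' σ ∧ linkC X'' σ = Z := by
  obtain ⟨α, β, hα, hβfacet, hαβ, hcof, hZeq⟩ := hZ
  rw [mem_linkC'] at hα
  obtain ⟨hαX, hαdisj, hασ⟩ := hα
  have hβmem := hβfacet.1
  rw [mem_linkC'] at hβmem
  obtain ⟨hβX, hβdisj, hβσ⟩ := hβmem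
  have hαne : α.Nonempty := hX'.1 _ hαX
  have hβne : β.Nonempty := hX'.1 _ hβX
  set X'' := X'.filter (fun s => ¬ (α ∪ σ) ⊆ s) with hX''def
  have hmem'' : ∀ s : Finset V, s ∈ X'' ↔ s ∈ X' ∧ ¬ (α ∪ σ) ⊆ s := by
    intro s; simp [hX''def, Finset.mem_filter]
  have hkey : ∀ t : Finset V, t ∈ X' → σ ⊆ t → (t \ σ).Nonempty →
      t \ σ ∈ linkC X' σ := by
    intro t ht hst hne
    rw [mem_linkC']
    refine ⟨hX'.2 t ht _ (Finset.sdiff_subset) hne, Finset.sdiff_disjoint, ?_⟩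
    rwa [Finset.sdiff_union_of_subset hst]
  have hfacet : IsFacet X' (β ∪ σ) := by
    refine ⟨hβσ, fun t ht hsub => ?_⟩
    have hσt : σ ⊆ t := (Finset.subset_union_right).trans hsub
    have hβt : β ⊆ t \ σ := by
      intro x hx
      exact Finset.mem_sdiff.2 ⟨hsub (Finset.mem_union_left _ hx),
        Finset.disjoint_left.1 hβdisj hx⟩
    have hμ : t \ σ ∈ linkC X' σ := hkey t ht hσt (hβne.mono hβt)
    have heq := hβfacet.2 _ hμ hβt
    rw [← Finset.sdiff_union_of_subset hσt, heq]
  have hss : α ∪ σ ⊂ β ∪ σ := by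
    obtain ⟨x, hxβ, hxα⟩ := Finset.exists_of_ssubset hαβ
    refine ⟨Finset.union_subset_union_left hαβ.1, fun hc => ?_⟩
    have hx := hc (Finset.mem_union_left _ hxβ)
    rcases Finset.mem_union.1 hx with h1 | h1
    · exact hxα h1
    · exact (Finset.disjoint_left.1 hβdisj hxβ) h1
  have hcof' : ∀ t ∈ X', α ∪ σ ⊆ t → t ⊆ β ∪ σ := by
    intro t ht hsub
    have hσt : σ ⊆ t := (Finset.subset_union_right).trans hsub
    have hαt : α ⊆ t \ σ := by
      intro x hx
      exact Finset.mem_sdiff.2 ⟨hsub (Finset.mem_union_left _ hx),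
        Finset.disjoint_left.1 hαdisj hx⟩
    have hμ : t \ σ ∈ linkC X' σ := hkey t ht hσt (hαne.mono hαt)
    have hμβ : t \ σ ⊆ β := hcof _ hμ hαt
    calc t = t \ σ ∪ σ := (Finset.sdiff_union_of_subset hσt).symm
      _ ⊆ β ∪ σ := Finset.union_subset_union_left hμβ
  have hec : ElemCollapse X' X'' := ⟨α ∪ σ, β ∪ σ, hασ, hfacet, hss, hcof', rfl⟩
  have hnotσ : ∀ s : Finset V, ¬ σ ⊆ s → ¬ (α ∪ σ) ⊆ s := by
    intro s hs hc
    exact hs ((Finset.subset_union_right).trans hc)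
  have hcomplex : IsComplex X'' := by
    constructor
    · intro s hs
      exact hX'.1 s ((hmem'' s).1 hs).1
    · intro s hs t hts htne
      obtain ⟨hs1, hs2⟩ := (hmem'' s).1 hs
      refine (hmem'' t).2 ⟨hX'.2 s hs1 t hts htne, fun hc => hs2 (hc.trans hts)⟩
  have hσ'' : σ ∈ X'' := by
    refine (hmem'' σ).2 ⟨hσ, fun hc => ?_⟩
    obtain ⟨a, ha⟩ := hαne
    exact Finset.disjoint_left.1 hαdisj ha (hc (Finset.mem_union_left _ ha))
  have hfd : faceDeletion X'' σ = faceDeletion X' σ := by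
    ext s
    simp only [faceDeletion, Finset.mem_filter, hmem'' s]
    constructor
    · rintro ⟨⟨h1, _⟩, h3⟩; exact ⟨h1, h3⟩
    · rintro ⟨h1, h2⟩; exact ⟨⟨h1, hnotσ s h2⟩, h2⟩
  have hlink : linkC X'' σ = Z := by
    rw [hZeq]
    ext η
    simp only [Finset.mem_filter, mem_linkC', hmem'']
    constructor
    · rintro ⟨⟨h1, _⟩, h2, h3, h4⟩
      refine ⟨⟨h1, h2, h3⟩, fun hc => h4 (Finset.union_subset_union_left hc)⟩
    · rintro ⟨⟨h1, h2, h3⟩, h4⟩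
      have hσnsub : ¬ σ ⊆ η := by
        obtain ⟨a, ha⟩ := hσne
        intro hc
        exact Finset.disjoint_left.1 h2 (hc ha) ha
      refine ⟨⟨h1, hnotσ η hσnsub⟩, h2, h3, fun hc => h4 ?_⟩
      intro x hx
      rcases Finset.mem_union.1 (hc (Finset.mem_union_left _ hx)) with h | h
      · exact h
      · exact absurd h (Finset.disjoint_left.1 hαdisj hx)
  exact ⟨X'', hec, hcomplex, hσ'', hfd, hlink⟩

/-- When the link has been reduced to a point, one more elementary collapse removes
the closed star. -/
private lemma final_aux {V : Type u} {X' : Finset (Finset V)} {σ : Finset V} {v : V}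
    (hX' : IsComplex X') (hσ : σ ∈ X') (hlink : linkC X' σ = {{v}}) :
    ElemCollapse X' (faceDeletion X' σ) := by
  have hv : ({v} : Finset V) ∈ linkC X' σ := by
    rw [hlink]; exact Finset.mem_singleton_self _
  rw [mem_linkC'] at hv
  obtain ⟨hvX, hvdisj, hvσ⟩ := hv
  have hvnσ : v ∉ σ := Finset.disjoint_left.1 hvdisj (Finset.mem_singleton_self v)
  have hkey : ∀ t : Finset V, t ∈ X' → σ ⊆ t → (t \ σ).Nonempty →
      t \ σ ∈ linkC X' σ := by
    intro t ht hst hne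
    rw [mem_linkC']
    refine ⟨hX'.2 t ht _ (Finset.sdiff_subset) hne, Finset.sdiff_disjoint, ?_⟩
    rwa [Finset.sdiff_union_of_subset hst]
  refine ⟨σ, {v} ∪ σ, hσ, ⟨hvσ, ?_⟩, ?_, ?_, rfl⟩
  · intro t ht hsub
    have hσt : σ ⊆ t := (Finset.subset_union_right).trans hsub
    have hvt : v ∈ t \ σ :=
      Finset.mem_sdiff.2 ⟨hsub (Finset.mem_union_left _ (Finset.mem_singleton_self v)), hvnσ⟩
    have hμ : t \ σ ∈ linkC X' σ := hkey t ht hσt ⟨v, hvt⟩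
    rw [hlink, Finset.mem_singleton] at hμ
    rw [← Finset.sdiff_union_of_subset hσt, hμ]
  · exact ⟨Finset.subset_union_right,
      fun hc => hvnσ (hc (Finset.mem_union_left _ (Finset.mem_singleton_self v)))⟩
  · intro t ht hsub
    rcases (t \ σ).eq_empty_or_nonempty with he | hne
    · have hts : t ⊆ σ := by
        intro x hx
        by_contra hxσ
        exact absurd (Finset.mem_sdiff.2 ⟨hx, hxσ⟩) (by simp [he])
      exact hts.trans Finset.subset_union_right
    · have hμ : t \ σ ∈ linkC X' σ := hkey t ht hsub hne
      rw [hlink, Finset.mem_singleton] at hμ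
      rw [← Finset.sdiff_union_of_subset hsub, hμ]

/-- Welker. If the link of a simplex `σ` of `X` is collapsible, then
`X` collapses onto the face-deletion of `σ`. -/
theorem stmt1 {V : Type u} (X : Finset (Finset V)) (hX : IsComplex X)
    (σ : Finset V) (hσ : σ ∈ X) (h : Collapsible (linkC X σ)) :
    Collapses X (faceDeletion X σ) := by
  obtain ⟨v, hv⟩ := h
  have hσne : σ.Nonempty := hX.1 σ hσ
  have key : ∀ Y Z : Finset (Finset V), Collapses Y Z →
      ∀ X' : Finset (Finset V), IsComplex X' → σ ∈ X' → linkC X' σ = Y →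
      ∃ X'' : Finset (Finset V), Collapses X' X'' ∧ IsComplex X'' ∧ σ ∈ X'' ∧
        faceDeletion X'' σ = faceDeletion X' σ ∧ linkC X'' σ = Z := by
    intro Y Z hYZ
    induction hYZ using Relation.ReflTransGen.head_induction_on with
    | refl =>
      intro X' h1 h2 h3
      exact ⟨X', Relation.ReflTransGen.refl, h1, h2, rfl, h3⟩
    | head hab _ ih =>
      intro X' h1 h2 h3
      obtain ⟨X'', hec, hc, hs, hfd, hl⟩ := step_aux hσne h1 h2 (h3 ▸ hab)
      obtain ⟨W, hcol, hc', hs', hfd', hl'⟩ := ih X'' hc hs hl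
      exact ⟨W, Relation.ReflTransGen.head hec hcol, hc', hs', hfd'.trans hfd, hl'⟩
  obtain ⟨X', hcol, hc, hs, hfd, hl⟩ := key _ _ hv X hX hσ rfl
  have hfinal := final_aux hc hs hl
  have hfin : Collapses X (faceDeletion X' σ) := Relation.ReflTransGen.tail hcol hfinal
  rwa [hfd] at hfin
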